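/- Let Δ₅ ⊂ ℝ² be the convex hull of (0,0), (5,0), (5,2), (7/2,7/2) and let P₅(x,y) = 4·x³·y³·(x+y)²·(x−y)². Then (∫_{Δ₅} x·P₅ dxdy)/(∫_{Δ₅} P₅ dxdy) = 1426329931935/326044716608 and (∫_{Δ₅} y·P₅ dxdy)/(∫_{Δ₅} P₅ dxdy) = 4418316612263/2282313016256; in particular the first quantity is greater than 4 and the sum of the two quantities is greater than 6. -/

import Mathlib

open MeasureTheory

namespace Barycenter5

/-- Halfplane description of the quadrilateral. -/
def S : Set (ℝ × ℝ) := {p | 0 ≤ p.2 ∧ p.2 ≤ p.1 ∧ p.1 + p.2 ≤ 7 ∧ p.1 ≤ 5}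

lemma S_eq : S = {p : ℝ × ℝ | p.1 ∈ Set.Icc (0:ℝ) 5 ∧ p.2 ∈ Set.Icc (0:ℝ) (min p.1 (7 - p.1))} := by
  ext p
  simp only [S, Set.mem_setOf_eq, Set.mem_Icc, le_min_iff]
  constructor
  · rintro ⟨h1, h2, h3, h4⟩
    exact ⟨⟨le_trans h1 h2, h4⟩, h1, h2, by linarith⟩
  · rintro ⟨⟨hx0, hx5⟩, hy0, hyx, hy7⟩
    exact ⟨hy0, hyx, by linarith, hx5⟩

lemma convex_S : Convex ℝ S := by
  rintro p hp q hq a b ha hb hab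
  simp only [S, Set.mem_setOf_eq] at *
  obtain ⟨h1, h2, h3, h4⟩ := hp
  obtain ⟨k1, k2, k3, k4⟩ := hq
  simp only [Prod.smul_fst, Prod.smul_snd, Prod.fst_add, Prod.snd_add, smul_eq_mul]
  refine ⟨?_, ?_, ?_, ?_⟩
  · nlinarith [mul_nonneg ha h1, mul_nonneg hb k1]
  · nlinarith [mul_le_mul_of_nonneg_left h2 ha, mul_le_mul_of_nonneg_left k2 hb]
  · nlinarith [mul_le_mul_of_nonneg_left h3 ha, mul_le_mul_of_nonneg_left k3 hb]
  · nlinarith [mul_le_mul_of_nonneg_left h4 ha, mul_le_mul_of_nonneg_left k4 hb]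

lemma hull_eq_S :
    convexHull ℝ {((0 : ℝ), (0 : ℝ)), (5, 0), (5, 2), (7 / 2, 7 / 2)} = S := by
  apply le_antisymm
  · apply convexHull_min _ convex_S
    intro p hp
    simp only [Set.mem_insert_iff, Set.mem_singleton_iff] at hp
    rcases hp with h | h | h | h <;> subst h <;> norm_num [S]
  · intro p hp
    obtain ⟨h1, h2, h3, h4⟩ := hp
    set V : Set (ℝ × ℝ) := {((0 : ℝ), (0 : ℝ)), (5, 0), (5, 2), (7 / 2, 7 / 2)} with hV
    set f : Fin 4 → ℝ × ℝ := ![(0, 0), (5, 0), (5, 2), (7 / 2, 7 / 2)] with hf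
    have hz : ∀ i ∈ (Finset.univ : Finset (Fin 4)), f i ∈ V := by
      intro i _
      fin_cases i <;> simp [hf, hV]
    by_cases hc : 5 * p.2 ≤ 2 * p.1
    · set w : Fin 4 → ℝ := ![1 - p.1 / 5, p.1 / 5 - p.2 / 2, p.2 / 2, 0] with hw
      have hsum : ∑ i ∈ (Finset.univ : Finset (Fin 4)), w i = 1 := by
        simp [hw, Fin.sum_univ_four]; try ring
      have hw0 : ∀ i ∈ (Finset.univ : Finset (Fin 4)), 0 ≤ w i := by
        intro i _
        fin_cases i <;> simp [hw] <;> try linarith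
      have hm := Finset.centerMass_mem_convexHull (Finset.univ : Finset (Fin 4))
        hw0 (by rw [hsum]; norm_num) hz
      rwa [Finset.centerMass_eq_of_sum_1 _ _ hsum,
        show ∑ i ∈ (Finset.univ : Finset (Fin 4)), w i • f i = p by
          apply Prod.ext <;> simp [hw, hf, Fin.sum_univ_four] <;> try ring] at hm
    · push_neg at hc
      set w : Fin 4 → ℝ := ![(7 - p.1 - p.2) / 7, 0, (p.1 - p.2) / 3, (10 * p.2 - 4 * p.1) / 21]
        with hw
      have hsum : ∑ i ∈ (Finset.univ : Finset (Fin 4)), w i = 1 := by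
        simp [hw, Fin.sum_univ_four]; try ring
      have hw0 : ∀ i ∈ (Finset.univ : Finset (Fin 4)), 0 ≤ w i := by
        intro i _
        fin_cases i <;> simp [hw] <;> try linarith
      have hm := Finset.centerMass_mem_convexHull (Finset.univ : Finset (Fin 4))
        hw0 (by rw [hsum]; norm_num) hz
      rwa [Finset.centerMass_eq_of_sum_1 _ _ hsum,
        show ∑ i ∈ (Finset.univ : Finset (Fin 4)), w i • f i = p by
          apply Prod.ext <;> simp [hw, hf, Fin.sum_univ_four] <;> try ring] at hm

lemma measurableSet_S : MeasurableSet S := by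
  have : S = {p : ℝ × ℝ | 0 ≤ p.2} ∩ ({p | p.2 ≤ p.1} ∩ ({p | p.1 + p.2 ≤ 7} ∩ {p | p.1 ≤ 5})) := by
    ext p; simp only [S, Set.mem_setOf_eq, Set.mem_inter_iff]; try tauto
  rw [this]
  exact (measurableSet_le measurable_const measurable_snd).inter
    ((measurableSet_le measurable_snd measurable_fst).inter
      ((measurableSet_le (measurable_fst.add measurable_snd) measurable_const).inter
        (measurableSet_le measurable_fst measurable_const)))


lemma fubini_S (F : ℝ × ℝ → ℝ) (hF : Continuous F) :
    ∫ p in S, F p = ∫ x in Set.Icc (0:ℝ) 5, ∫ y in Set.Icc (0:ℝ) (min x (7 - x)), F (x, y) := by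
  have hS := measurableSet_S
  have hsub : S ⊆ Set.Icc (0:ℝ) 5 ×ˢ Set.Icc (0:ℝ) 5 := by
    rw [S_eq]
    rintro p ⟨hp1, hp2⟩
    exact ⟨hp1, hp2.1, le_trans hp2.2 (le_trans (min_le_left _ _) hp1.2)⟩
  have hint : IntegrableOn F S :=
    ((hF.continuousOn.integrableOn_compact (isCompact_Icc.prod isCompact_Icc))).mono_set hsub
  have hprod : Integrable (S.indicator F) (volume.prod volume) := by
    rw [← MeasureTheory.Measure.volume_eq_prod]
    rwa [integrable_indicator_iff hS]
  have key : ∀ x : ℝ, (∫ y, S.indicator F (x, y)) =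
      (Set.Icc (0:ℝ) 5).indicator
        (fun x => ∫ y in Set.Icc (0:ℝ) (min x (7 - x)), F (x, y)) x := by
    intro x
    by_cases hx : x ∈ Set.Icc (0:ℝ) 5
    · rw [Set.indicator_of_mem hx, ← integral_indicator measurableSet_Icc]
      congr 1
      funext y
      by_cases hy : y ∈ Set.Icc (0:ℝ) (min x (7 - x))
      · rw [Set.indicator_of_mem hy, Set.indicator_of_mem (by rw [S_eq]; exact ⟨hx, hy⟩)]
      · rw [Set.indicator_of_notMem hy,
          Set.indicator_of_notMem (by rw [S_eq]; exact fun h => hy h.2)]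
    · rw [Set.indicator_of_notMem hx]
      have hz : ∀ y : ℝ, S.indicator F (x, y) = 0 := fun y =>
        Set.indicator_of_notMem (by rw [S_eq]; exact fun h => hx h.1) _
      simp [hz]
  calc ∫ p in S, F p = ∫ p, S.indicator F p := (integral_indicator hS).symm
    _ = ∫ p, S.indicator F p ∂(volume.prod volume) := by rw [← MeasureTheory.Measure.volume_eq_prod]
    _ = ∫ x, ∫ y, S.indicator F (x, y) := MeasureTheory.integral_prod _ hprod
    _ = ∫ x, (Set.Icc (0:ℝ) 5).indicator
          (fun x => ∫ y in Set.Icc (0:ℝ) (min x (7 - x)), F (x, y)) x :=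
        integral_congr_ae (Filter.Eventually.of_forall key)
    _ = _ := integral_indicator measurableSet_Icc

lemma setIntegral_S (F : ℝ × ℝ → ℝ) (hF : Continuous F) (q1 q2 : ℝ → ℝ)
    (hq1 : Continuous q1) (hq2 : Continuous q2)
    (h1 : ∀ x ∈ Set.Ioc (0:ℝ) (7/2), (∫ y in (0:ℝ)..x, F (x, y)) = q1 x)
    (h2 : ∀ x ∈ Set.Ioc (7/2:ℝ) 5, (∫ y in (0:ℝ)..(7 - x), F (x, y)) = q2 x) :
    ∫ p in S, F p = (∫ x in (0:ℝ)..(7/2), q1 x) + ∫ x in (7/2:ℝ)..5, q2 x := by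
  have e1 : Set.EqOn (fun x => ∫ y in Set.Icc (0:ℝ) (min x (7 - x)), F (x, y)) q1
      (Set.Ioc (0:ℝ) (7/2)) := by
    intro x hx
    rw [Set.mem_Ioc] at hx
    have hm : min x (7 - x) = x := min_eq_left (by linarith)
    simp only [hm]
    rw [MeasureTheory.integral_Icc_eq_integral_Ioc, ← intervalIntegral.integral_of_le hx.1.le]
    exact h1 x (Set.mem_Ioc.2 hx)
  have e2 : Set.EqOn (fun x => ∫ y in Set.Icc (0:ℝ) (min x (7 - x)), F (x, y)) q2
      (Set.Ioc (7/2:ℝ) 5) := by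
    intro x hx
    rw [Set.mem_Ioc] at hx
    have hm : min x (7 - x) = 7 - x := min_eq_right (by linarith)
    simp only [hm]
    rw [MeasureTheory.integral_Icc_eq_integral_Ioc,
      ← intervalIntegral.integral_of_le (by linarith : (0:ℝ) ≤ 7 - x)]
    exact h2 x (Set.mem_Ioc.2 hx)
  have hi1 : IntegrableOn (fun x => ∫ y in Set.Icc (0:ℝ) (min x (7 - x)), F (x, y))
      (Set.Ioc (0:ℝ) (7/2)) :=
    ((hq1.integrableOn_Ioc).congr_fun (fun x hx => (e1 hx).symm) measurableSet_Ioc)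
  have hi2 : IntegrableOn (fun x => ∫ y in Set.Icc (0:ℝ) (min x (7 - x)), F (x, y))
      (Set.Ioc (7/2:ℝ) 5) :=
    ((hq2.integrableOn_Ioc).congr_fun (fun x hx => (e2 hx).symm) measurableSet_Ioc)
  rw [fubini_S F hF, MeasureTheory.integral_Icc_eq_integral_Ioc,
    ← Set.Ioc_union_Ioc_eq_Ioc (by norm_num : (0:ℝ) ≤ 7/2) (by norm_num : (7/2:ℝ) ≤ 5),
    MeasureTheory.setIntegral_union (Set.Ioc_disjoint_Ioc_of_le le_rfl) measurableSet_Ioc hi1 hi2,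
    MeasureTheory.setIntegral_congr_fun measurableSet_Ioc e1,
    MeasureTheory.setIntegral_congr_fun measurableSet_Ioc e2,
    ← intervalIntegral.integral_of_le (by norm_num : (0:ℝ) ≤ 7/2),
    ← intervalIntegral.integral_of_le (by norm_num : (7/2:ℝ) ≤ 5)]


lemma integral_poly (a b : ℝ) (c : ℕ → ℝ) (N : ℕ) :
    (∫ x in a..b, ∑ i ∈ Finset.range N, c i * x ^ i) =
      ∑ i ∈ Finset.range N, c i * (b ^ (i+1) - a ^ (i+1)) / (i+1) := by
  rw [intervalIntegral.integral_finset_sum (f := fun i (x : ℝ) => c i * x ^ i) (fun i _ =>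
    (Continuous.intervalIntegrable (continuous_const.mul (continuous_pow i) : Continuous fun x : ℝ => c i * x ^ i) a b))]
  refine Finset.sum_congr rfl fun i _ => ?_
  rw [intervalIntegral.integral_const_mul, _root_.integral_pow]
  ring

lemma innerP (x u : ℝ) :
    (∫ y in (0:ℝ)..u, 4*x^3*y^3*(x+y)^2*(x-y)^2) =
      x^7*u^4 - 4/3*x^5*u^6 + 1/2*x^3*u^8 := by
  have hG : ∀ y : ℝ, HasDerivAt (fun y : ℝ => x^7*y^4 - 4/3*x^5*y^6 + 1/2*x^3*y^8)
      (4*x^3*y^3*(x+y)^2*(x-y)^2) y := by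
    intro y
    have h := (((hasDerivAt_pow 4 y).const_mul (x^7)).sub
        ((hasDerivAt_pow 6 y).const_mul (4/3*x^5))).add
      ((hasDerivAt_pow 8 y).const_mul (1/2*x^3))
    refine h.congr_deriv ?_
    norm_num
    ring
  rw [intervalIntegral.integral_eq_sub_of_hasDerivAt (fun y _ => hG y)
    ((Continuous.intervalIntegrable (by fun_prop) _ _))]
  norm_num

lemma innerY (x u : ℝ) :
    (∫ y in (0:ℝ)..u, y * (4*x^3*y^3*(x+y)^2*(x-y)^2)) =
      4/5*x^7*u^5 - 8/7*x^5*u^7 + 4/9*x^3*u^9 := by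
  have hG : ∀ y : ℝ, HasDerivAt (fun y : ℝ => 4/5*x^7*y^5 - 8/7*x^5*y^7 + 4/9*x^3*y^9)
      (y * (4*x^3*y^3*(x+y)^2*(x-y)^2)) y := by
    intro y
    have h := (((hasDerivAt_pow 5 y).const_mul (4/5*x^7)).sub
        ((hasDerivAt_pow 7 y).const_mul (8/7*x^5))).add
      ((hasDerivAt_pow 9 y).const_mul (4/9*x^3))
    refine h.congr_deriv ?_
    norm_num
    ring
  rw [intervalIntegral.integral_eq_sub_of_hasDerivAt (fun y _ => hG y)
    ((Continuous.intervalIntegrable (by fun_prop) _ _))]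
  norm_num
noncomputable def c1P : ℕ → ℝ := fun i => if i = 11 then (1/6 : ℝ) else 0
noncomputable def c2P : ℕ → ℝ := fun i => if i = 3 then (5764801/2 : ℝ) else if i = 4 then (-3294172 : ℝ) else if i = 5 then (4470662/3 : ℝ) else if i = 6 then (-336140 : ℝ) else if i = 7 then (38416 : ℝ) else if i = 8 then (-5488/3 : ℝ) else if i = 11 then (1/6 : ℝ) else 0
lemma valP1 : (∫ x in (0:ℝ)..(7/2), ∑ i ∈ Finset.range 13, c1P i * x ^ i) = (13841287201/294912 : ℝ) := by
  rw [integral_poly]; norm_num [Finset.sum_range_succ, c1P]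
lemma valP2 : (∫ x in (7/2:ℝ)..5, ∑ i ∈ Finset.range 13, c2P i * x ^ i) = (170659642691/163840 : ℝ) := by
  rw [integral_poly]; norm_num [Finset.sum_range_succ, c2P]
noncomputable def c1X : ℕ → ℝ := fun i => if i = 12 then (1/6 : ℝ) else 0
noncomputable def c2X : ℕ → ℝ := fun i => if i = 4 then (5764801/2 : ℝ) else if i = 5 then (-3294172 : ℝ) else if i = 6 then (4470662/3 : ℝ) else if i = 7 then (-336140 : ℝ) else if i = 8 then (38416 : ℝ) else if i = 9 then (-5488/3 : ℝ) else if i = 12 then (1/6 : ℝ) else 0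
lemma valX1 : (∫ x in (0:ℝ)..(7/2), ∑ i ∈ Finset.range 13, c1X i * x ^ i) = (96889010407/638976 : ℝ) := by
  rw [integral_poly]; norm_num [Finset.sum_range_succ, c1X]
lemma valX2 : (∫ x in (7/2:ℝ)..5, ∑ i ∈ Finset.range 13, c2X i * x ^ i) = (981982725907/212992 : ℝ) := by
  rw [integral_poly]; norm_num [Finset.sum_range_succ, c2X]
noncomputable def c1Y : ℕ → ℝ := fun i => if i = 12 then (32/315 : ℝ) else 0
noncomputable def c2Y : ℕ → ℝ := fun i => if i = 3 then (161414428/9 : ℝ) else if i = 4 then (-23059204 : ℝ) else if i = 5 then (12235496 : ℝ) else if i = 6 then (-10353112/3 : ℝ) else if i = 7 then (2756348/5 : ℝ) else if i = 8 then (-48020 : ℝ) else if i = 9 then (5488/3 : ℝ) else if i = 12 then (-32/315 : ℝ) else 0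
lemma valY1 : (∫ x in (0:ℝ)..(7/2), ∑ i ∈ Finset.range 13, c1Y i * x ^ i) = (13841287201/149760 : ℝ) := by
  rw [integral_poly]; norm_num [Finset.sum_range_succ, c1Y]
lemma valY2 : (∫ x in (7/2:ℝ)..5, ∑ i ∈ Finset.range 13, c2Y i * x ^ i) = (1408179530483/698880 : ℝ) := by
  rw [integral_poly]; norm_num [Finset.sum_range_succ, c2Y]

lemma idP1 : ∀ x ∈ Set.Ioc (0:ℝ) (7/2),
    (∫ y in (0:ℝ)..x, 4*x^3*y^3*(x+y)^2*(x-y)^2) = ∑ i ∈ Finset.range 13, c1P i * x ^ i := by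
  intro x _
  rw [innerP]
  norm_num [Finset.sum_range_succ, c1P]
  try ring

lemma idP2 : ∀ x ∈ Set.Ioc (7/2:ℝ) 5,
    (∫ y in (0:ℝ)..(7-x), 4*x^3*y^3*(x+y)^2*(x-y)^2) = ∑ i ∈ Finset.range 13, c2P i * x ^ i := by
  intro x _
  rw [innerP]
  norm_num [Finset.sum_range_succ, c2P]
  try ring

lemma idX1 : ∀ x ∈ Set.Ioc (0:ℝ) (7/2),
    (∫ y in (0:ℝ)..x, x * (4*x^3*y^3*(x+y)^2*(x-y)^2)) = ∑ i ∈ Finset.range 13, c1X i * x ^ i := by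
  intro x _
  rw [intervalIntegral.integral_const_mul, innerP]
  norm_num [Finset.sum_range_succ, c1X]
  try ring

lemma idX2 : ∀ x ∈ Set.Ioc (7/2:ℝ) 5,
    (∫ y in (0:ℝ)..(7-x), x * (4*x^3*y^3*(x+y)^2*(x-y)^2)) = ∑ i ∈ Finset.range 13, c2X i * x ^ i := by
  intro x _
  rw [intervalIntegral.integral_const_mul, innerP]
  norm_num [Finset.sum_range_succ, c2X]
  try ring

lemma idY1 : ∀ x ∈ Set.Ioc (0:ℝ) (7/2),
    (∫ y in (0:ℝ)..x, y * (4*x^3*y^3*(x+y)^2*(x-y)^2)) = ∑ i ∈ Finset.range 13, c1Y i * x ^ i := by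
  intro x _
  rw [innerY]
  norm_num [Finset.sum_range_succ, c1Y]
  try ring

lemma idY2 : ∀ x ∈ Set.Ioc (7/2:ℝ) 5,
    (∫ y in (0:ℝ)..(7-x), y * (4*x^3*y^3*(x+y)^2*(x-y)^2)) = ∑ i ∈ Finset.range 13, c2Y i * x ^ i := by
  intro x _
  rw [innerY]
  norm_num [Finset.sum_range_succ, c2Y]
  try ring

end Barycenter5

/-- The barycenter of the moment polytope `Δ₅` of `X₅` with respect to the
Duistermaat–Heckman measure is `(1426329931935/326044716608, 4418316612263/2282313016256)`;
in particular `x̄ > 4` and `x̄ + ȳ > 6`. -/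
theorem barycenter_Delta5 :
    let Δ : Set (ℝ × ℝ) := convexHull ℝ
      {((0 : ℝ), (0 : ℝ)), (5, 0), (5, 2), (7 / 2, 7 / 2)}
    let P : ℝ × ℝ → ℝ := fun p =>
      4 * p.1 ^ 3 * p.2 ^ 3 * (p.1 + p.2) ^ 2 * (p.1 - p.2) ^ 2
    let xbar : ℝ := (∫ p in Δ, p.1 * P p) / (∫ p in Δ, P p)
    let ybar : ℝ := (∫ p in Δ, p.2 * P p) / (∫ p in Δ, P p)
    xbar = 1426329931935 / 326044716608 ∧ ybar = 4418316612263 / 2282313016256 ∧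
      4 < xbar ∧ 6 < xbar + ybar := by
  intro Δ P xbar ybar
  have hΔ : Δ = Barycenter5.S := Barycenter5.hull_eq_S
  have contq : ∀ c : ℕ → ℝ, Continuous fun x : ℝ => ∑ i ∈ Finset.range 13, c i * x ^ i :=
    fun c => continuous_finset_sum _ (fun i _ => continuous_const.mul (continuous_pow i))
  have IP : (∫ p in Δ, P p) = 391880669/360 := by
    rw [hΔ]
    have h := Barycenter5.setIntegral_S
      (fun p : ℝ × ℝ => 4*p.1^3*p.2^3*(p.1+p.2)^2*(p.1-p.2)^2) (by fun_prop)
      (fun x : ℝ => ∑ i ∈ Finset.range 13, Barycenter5.c1P i * x ^ i)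
      (fun x : ℝ => ∑ i ∈ Finset.range 13, Barycenter5.c2P i * x ^ i)
      (contq _) (contq _)
      (fun x hx => Barycenter5.idP1 x hx) (fun x hx => Barycenter5.idP2 x hx)
    rw [Barycenter5.valP1, Barycenter5.valP2] at h
    exact h.trans (by norm_num)
  have IX : (∫ p in Δ, p.1 * P p) = 95088662129/19968 := by
    rw [hΔ]
    have h := Barycenter5.setIntegral_S
      (fun p : ℝ × ℝ => p.1 * (4*p.1^3*p.2^3*(p.1+p.2)^2*(p.1-p.2)^2)) (by fun_prop)
      (fun x : ℝ => ∑ i ∈ Finset.range 13, Barycenter5.c1X i * x ^ i)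
      (fun x : ℝ => ∑ i ∈ Finset.range 13, Barycenter5.c2X i * x ^ i)
      (contq _) (contq _)
      (fun x hx => Barycenter5.idX1 x hx) (fun x hx => Barycenter5.idX2 x hx)
    rw [Barycenter5.valX1, Barycenter5.valX2] at h
    exact h.trans (by norm_num)
  have IY : (∫ p in Δ, p.2 * P p) = 4418316612263/2096640 := by
    rw [hΔ]
    have h := Barycenter5.setIntegral_S
      (fun p : ℝ × ℝ => p.2 * (4*p.1^3*p.2^3*(p.1+p.2)^2*(p.1-p.2)^2)) (by fun_prop)
      (fun x : ℝ => ∑ i ∈ Finset.range 13, Barycenter5.c1Y i * x ^ i)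
      (fun x : ℝ => ∑ i ∈ Finset.range 13, Barycenter5.c2Y i * x ^ i)
      (contq _) (contq _)
      (fun x hx => Barycenter5.idY1 x hx) (fun x hx => Barycenter5.idY2 x hx)
    rw [Barycenter5.valY1, Barycenter5.valY2] at h
    exact h.trans (by norm_num)
  have hxbar : xbar = (95088662129/19968 : ℝ) / (391880669/360 : ℝ) := by
    rw [show xbar = (∫ p in Δ, p.1 * P p) / (∫ p in Δ, P p) from rfl, IX, IP]
  have hybar : ybar = (4418316612263/2096640 : ℝ) / (391880669/360 : ℝ) := by
    rw [show ybar = (∫ p in Δ, p.2 * P p) / (∫ p in Δ, P p) from rfl, IY, IP]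
  refine ⟨?_, ?_, ?_, ?_⟩
  · rw [hxbar]; norm_num
  · rw [hybar]; norm_num
  · rw [hxbar]; norm_num
  · rw [hxbar, hybar]; norm_num
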